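/- If F = F(v, t, t_1, t_2, ...) is a v-invariant of the discrete hyperbolic equation t_{uv} = f(t, t_u, t_v), i.e. \bar{D}F = F where \bar{D} is the shift in v, then F does not depend on any of the variables \bar{t}_j = \bar{D}^j t for j ≥ 1. -/
import Mathlib

private def RowFn (f : ℝ → ℝ → ℝ → ℝ) (a : ℕ → ℝ) (c : ℝ) : ℕ → ℝ
  | 0 => c
  | j+1 => f (a j) (a (j+1)) (RowFn f a c j)

theorem stmt0
    (f : ℝ → ℝ → ℝ → ℝ)
    -- hyperbolicity: there exist solutions with arbitrary data on the two axes
    (hsol : ∀ a b : ℤ → ℝ, a 0 = b 0 →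
      ∃ t : ℤ → ℤ → ℝ,
        (∀ u v : ℤ, t (u+1) (v+1) = f (t u v) (t (u+1) v) (t u (v+1))) ∧
        (∀ u : ℤ, t u 0 = a u) ∧ (∀ v : ℤ, t 0 v = b v))
    (F : ℤ → (ℕ → ℝ) → (ℕ → ℝ) → ℝ)
    -- `F` depends on only finitely many of the dynamical variables
    (hfin : ∃ N : ℕ, ∀ (v : ℤ) (a a' b b' : ℕ → ℝ),
      (∀ j ≤ N, a j = a' j) → (∀ j ≤ N, b j = b' j) → F v a b = F v a' b')
    -- `F` is a `v`-invariant: `D̄F = F` on every solution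
    (hinv : ∀ t : ℤ → ℤ → ℝ,
      (∀ u v : ℤ, t (u+1) (v+1) = f (t u v) (t (u+1) v) (t u (v+1))) →
      ∀ u v : ℤ,
        F (v+1) (fun j => t (u + j) (v+1)) (fun j => t u (v + 1 + (j+1)))
          = F v (fun j => t (u + j) v) (fun j => t u (v + (j+1)))) :
    -- conclusion: `F` does not depend on `t̄₁, t̄₂, …`
    ∀ (v : ℤ) (a b b' : ℕ → ℝ), F v a b = F v a b' := by
  obtain ⟨N, hN⟩ := hfin
  -- Step lemma (S): going up one level
  have stepS : ∀ (v : ℤ) (a b : ℕ → ℝ),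
      F v a b = F (v+1) (RowFn f a (b 0)) (fun j => b (j+1)) := by
    intro v a b
    obtain ⟨s, hs, hsa, hsb⟩ := hsol (fun u => if 0 ≤ u then a u.toNat else a 0)
      (fun w => if 1 ≤ w then b (w-1).toNat else a 0) (by norm_num)
    set t : ℤ → ℤ → ℝ := fun u w => s u (w - v) with htdef
    have ht : ∀ u w : ℤ, t (u+1) (w+1) = f (t u w) (t (u+1) w) (t u (w+1)) := by
      intro u w
      have h := hs u (w - v)
      simp only [htdef]
      have e1 : w + 1 - v = (w - v) + 1 := by ring
      rw [e1, h]
    have key := hinv t ht 0 v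
    have hs0 : ∀ j : ℕ, s j 0 = a j := by
      intro j
      rw [hsa j, if_pos (by positivity)]
      simp
    have hrow0 : (fun j : ℕ => t (0 + j) v) = a := by
      funext j
      simp only [htdef, zero_add, sub_self]
      exact hs0 j
    have htail0 : (fun j : ℕ => t 0 (v + (j+1))) = b := by
      funext j
      simp only [htdef]
      have e : v + (j+1) - v = ((j : ℤ) + 1) := by ring
      rw [e, hsb, if_pos (by omega)]
      congr 1
      omega
    have hs1 : ∀ j : ℕ, s j 1 = RowFn f a (b 0) j := by
      intro j
      induction j with
      | zero =>
        show s ((0:ℕ):ℤ) 1 = b 0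
        rw [show ((0:ℕ):ℤ) = 0 by norm_num, hsb 1, if_pos le_rfl]
        norm_num
      | succ j ih =>
        have h := hs j 0
        norm_num at h
        have h2 : s ((j:ℤ)+1) 0 = a (j+1) := by
          rw [show ((j:ℤ)+1) = ((j+1 : ℕ) : ℤ) by push_cast; ring]
          exact hs0 (j+1)
        show s (((j+1:ℕ)):ℤ) 1 = f (a j) (a (j+1)) (RowFn f a (b 0) j)
        rw [show (((j+1:ℕ)):ℤ) = (j:ℤ)+1 by push_cast; ring, h, hs0 j, h2, ih]
    have hrow1 : (fun j : ℕ => t (0 + j) (v+1)) = RowFn f a (b 0) := by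
      funext j
      simp only [htdef, zero_add]
      have e : v + 1 - v = (1 : ℤ) := by ring
      rw [e]
      exact hs1 j
    have htail1 : (fun j : ℕ => t 0 (v + 1 + (j+1))) = fun j => b (j+1) := by
      funext j
      simp only [htdef]
      have e : v + 1 + (j+1) - v = ((j : ℤ) + 2) := by ring
      rw [e, hsb, if_pos (by omega)]
      congr 1
      omega
    rw [hrow0, htail0, hrow1, htail1] at key
    exact key.symm
  -- Preimage lemma (T): every row arises as RowFn of the row below
  have preim : ∀ A : ℕ → ℝ, ∃ a : ℕ → ℝ, RowFn f a (A 0) = A := by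
    intro A
    obtain ⟨s, hs, hsa, hsb⟩ := hsol (fun u => if 0 ≤ u then A u.toNat else A 0)
      (fun _ => A 0) (by norm_num)
    have hs0 : ∀ j : ℕ, s j 0 = A j := by
      intro j
      rw [hsa j, if_pos (by positivity)]
      simp
    refine ⟨fun j => s j (-1), ?_⟩
    funext j
    induction j with
    | zero => rfl
    | succ j ih =>
      have h := hs j (-1)
      norm_num at h
      have h1 : s ((j:ℤ)+1) 0 = A (j+1) := by
        rw [show ((j:ℤ)+1) = ((j+1 : ℕ) : ℤ) by push_cast; ring]
        exact hs0 (j+1)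
      show f (s j (-1)) (s ((j+1 : ℕ) : ℤ) (-1)) (RowFn f (fun j => s j (-1)) (A 0) j) = A (j+1)
      rw [hs0 j] at h
      rw [ih, show (((j+1 : ℕ)) : ℤ) = (j:ℤ)+1 by push_cast; ring, ← h, h1]
  -- cons
  let cons : ℝ → (ℕ → ℝ) → (ℕ → ℝ) := fun x B j => match j with
    | 0 => x
    | j+1 => B j
  -- Key downward induction
  have key : ∀ m : ℕ, ∀ (v : ℤ) (A B B' : ℕ → ℝ),
      (∀ j, j < N + 1 - m → B j = B' j) → F v A B = F v A B' := by
    intro m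
    induction m with
    | zero =>
      intro v A B B' h
      exact hN v A A B B' (fun j _ => rfl) (fun j hj => h j (by omega))
    | succ m ih =>
      intro v A B B' h
      obtain ⟨a, ha⟩ := preim A
      have e1 : F (v-1) a (cons (A 0) B) = F v A B := by
        have := stepS (v-1) a (cons (A 0) B)
        rw [sub_add_cancel] at this
        rw [this]
        show F v (RowFn f a (A 0)) B = F v A B
        rw [ha]
      have e2 : F (v-1) a (cons (A 0) B') = F v A B' := by
        have := stepS (v-1) a (cons (A 0) B')
        rw [sub_add_cancel] at this
        rw [this]
        show F v (RowFn f a (A 0)) B' = F v A B'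
        rw [ha]
      rw [← e1, ← e2]
      refine ih (v-1) a _ _ ?_
      intro j hj
      match j with
      | 0 => rfl
      | j+1 => exact h j (by omega)
  intro v a b b'
  exact key (N+1) v a b b' (fun j hj => by omega)
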